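/- Let M be a commutative monoid, and let f : I → J, k : I → L, l : J → K, g : L → K be functions between types with I and L finite, such that l ∘ f = g ∘ k and the map from I to the type {(j, z) : J × L // l j = g z} sending i to (f i, k i) is bijective (i.e., the commutative square (f, k, l, g) is a pullback square of types). Then for every y : L → M and every j : J, ∏_{i : I with f i = j} y (k i) = ∏_{z : L with g z = l j} y z, where each product ranges over the finite set of elements satisfying the stated condition. -/
import Mathlib

open Finset

theorem fiberwise_prod_beck_chevalley {M : Type*} [CommMonoid M]
    {I J K L : Type*} [Fintype I] [Fintype L] [DecidableEq J] [DecidableEq K]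
    (f : I → J) (k : I → L) (l : J → K) (g : L → K)
    (hcomm : ∀ i, l (f i) = g (k i))
    (hbij : Function.Bijective
      (fun i => (⟨(f i, k i), hcomm i⟩ : {p : J × L // l p.1 = g p.2})))
    (y : L → M) (j : J) :
    ∏ i ∈ Finset.univ.filter (fun i => f i = j), y (k i)
      = ∏ z ∈ Finset.univ.filter (fun z => g z = l j), y z := by
  apply Finset.prod_bij (fun i _ => k i)
  · intro i hi
    simp only [mem_filter, mem_univ, true_and] at hi ⊢
    rw [← hcomm i, hi]
  · intro a ha b hb hab
    simp only [mem_filter, mem_univ, true_and] at ha hb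
    have := hbij.1 (a₁ := a) (a₂ := b) (by
      apply Subtype.ext
      simp [ha, hb, hab])
    exact this
  · intro z hz
    simp only [mem_filter, mem_univ, true_and] at hz
    obtain ⟨i, hi⟩ := hbij.2 ⟨(j, z), hz.symm⟩
    have h1 : f i = j := congrArg (·.1.1) hi
    have h2 : k i = z := congrArg (·.1.2) hi
    exact ⟨i, by simp [h1], h2⟩
  · intro i _; rfl
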